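/- Let q₁*, q₃* ∈ (0,1) with q₁* ≠ q₃*, and define q₁, q₃ as in Corollary 2: q₁ = (3q₁* + q₃* − (q₁*)² − 3q₁*q₃*)/(2(2 − q₁* − q₃*)), q₃ = (5(q₁*)²q₃* + 10q₁*(q₃*)² + (q₃*)³ − (q₁*)² − 22q₁*q₃* − 9(q₃*)² + 4q₁* + 12q₃*)/(4(2 − q₁* − q₃*)²). Then 1/(1−q₃) + 1/(1−q₁) − 1/(1−q₃*) − 1/(1−q₁*) = −(2−q₁*−q₃*)²(q₁*−q₃*)² / [ (1−q₁*)(1−q₃*)((2q₁*+q₃*−3)² + (1−q₁*)(7−q₁*−6q₃*))(4−q₁*−3q₃*) ], which is strictly negative. -/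

import Mathlib

theorem stmt_18 (q₁s q₃s : ℝ) (h₁ : 0 < q₁s) (h₁' : q₁s < 1)
    (h₃ : 0 < q₃s) (h₃' : q₃s < 1) (hne : q₁s ≠ q₃s)
    (q₁ q₃ : ℝ)
    (hq₁ : q₁ = (3*q₁s + q₃s - q₁s^2 - 3*q₁s*q₃s)/(2*(2 - q₁s - q₃s)))
    (hq₃ : q₃ = (5*q₁s^2*q₃s + 10*q₁s*q₃s^2 + q₃s^3 - q₁s^2 - 22*q₁s*q₃s - 9*q₃s^2 + 4*q₁s + 12*q₃s)/(4*(2 - q₁s - q₃s)^2)) :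
    1/(1-q₃) + 1/(1-q₁) - 1/(1-q₃s) - 1/(1-q₁s)
      = -((2-q₁s-q₃s)^2*(q₁s-q₃s)^2) /
        ((1-q₁s)*(1-q₃s)*((2*q₁s+q₃s-3)^2 + (1-q₁s)*(7-q₁s-6*q₃s))*(4-q₁s-3*q₃s)) ∧
    -((2-q₁s-q₃s)^2*(q₁s-q₃s)^2) /
        ((1-q₁s)*(1-q₃s)*((2*q₁s+q₃s-3)^2 + (1-q₁s)*(7-q₁s-6*q₃s))*(4-q₁s-3*q₃s)) < 0 := by
  have hs : 0 < 2 - q₁s - q₃s := by linarith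
  have h1 : 0 < 1 - q₁s := by linarith
  have h3 : 0 < 1 - q₃s := by linarith
  have h43 : 0 < 4 - q₁s - 3*q₃s := by linarith
  have hD : 0 < (2*q₁s+q₃s-3)^2 + (1-q₁s)*(7-q₁s-6*q₃s) := by
    have : 0 < (1-q₁s)*(7-q₁s-6*q₃s) := by
      apply mul_pos h1; linarith
    nlinarith [sq_nonneg (2*q₁s+q₃s-3)]
  have hq1pos : 0 < 1 - q₁ := by
    rw [hq₁]
    have : 1 - (3*q₁s + q₃s - q₁s^2 - 3*q₁s*q₃s)/(2*(2 - q₁s - q₃s))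
        = ((1-q₁s)*(4-q₁s-3*q₃s))/(2*(2 - q₁s - q₃s)) := by
      field_simp; ring
    rw [this]
    positivity
  have hq3pos : 0 < 1 - q₃ := by
    rw [hq₃]
    have : 1 - (5*q₁s^2*q₃s + 10*q₁s*q₃s^2 + q₃s^3 - q₁s^2 - 22*q₁s*q₃s - 9*q₃s^2 + 4*q₁s + 12*q₃s)/(4*(2 - q₁s - q₃s)^2)
        = ((1-q₃s)*((2*q₁s+q₃s-3)^2 + (1-q₁s)*(7-q₁s-6*q₃s)))/(4*(2 - q₁s - q₃s)^2) := by
      field_simp; ring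
    rw [this]
    positivity
  have e1 : 1 - q₁ = ((1-q₁s)*(4-q₁s-3*q₃s))/(2*(2 - q₁s - q₃s)) := by
    rw [hq₁]; field_simp; ring
  have e3 : 1 - q₃ = ((1-q₃s)*((2*q₁s+q₃s-3)^2 + (1-q₁s)*(7-q₁s-6*q₃s)))/(4*(2 - q₁s - q₃s)^2) := by
    rw [hq₃]; field_simp; ring
  constructor
  · rw [e1, e3]
    generalize hDD : (2*q₁s+q₃s-3)^2 + (1-q₁s)*(7-q₁s-6*q₃s) = D at hD ⊢
    generalize hEE : 4-q₁s-3*q₃s = E at h43 ⊢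
    field_simp
    rw [← hDD, ← hEE]
    ring
  · have hd : (q₁s - q₃s) ≠ 0 := sub_ne_zero.mpr hne
    have hnum : 0 < (2-q₁s-q₃s)^2*(q₁s-q₃s)^2 := by positivity
    exact div_neg_of_neg_of_pos (by linarith) (by positivity)
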